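/- Let ℓ : [0,1] → ℝⁿ be the affine segment ℓ(t) = (1-t)v₁ + t v₂ between two points v₁, v₂ ∈ ℝⁿ, and let c : [0,1] → ℝⁿ be any continuous curve with c(0) = v₁ and c(1) = v₂. Then for every r > 0, the Lebesgue measure of the open r-neighborhood of the image of ℓ is at most the Lebesgue measure of the open r-neighborhood of the image of c. -/

import Mathlib

set_option maxHeartbeats 1000000

open MeasureTheory Set Metric
open scoped RealInnerProductSpace

private lemma sq_le_norm_le {n : ℕ} {x y : EuclideanSpace ℝ (Fin n)}
    (h : ‖x‖ ^ 2 ≤ ‖y‖ ^ 2) : ‖x‖ ≤ ‖y‖ :=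
  (pow_le_pow_iff_left₀ (norm_nonneg _) (norm_nonneg _) two_ne_zero).1 h

private lemma stmt3_aux {n : ℕ} {v₁ v₂ : EuclideanSpace ℝ (Fin n)}
    {S : Set (EuclideanSpace ℝ (Fin n))} {d : ℝ} (hd : 0 < d) (hdef : v₂ = v₁ + d • (d⁻¹ • (v₂ - v₁)))
    (hv₁ : v₁ ∈ S) (hv₂ : v₂ ∈ S)
    (hslice : ∀ a : ℝ, 0 ≤ a → a ≤ d → ∃ p ∈ S, ⟪p - v₁, d⁻¹ • (v₂ - v₁)⟫ = a)
    (hee : ⟪d⁻¹ • (v₂ - v₁), d⁻¹ • (v₂ - v₁)⟫ = 1)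
    {r : ℝ} (hr : 0 < r) {K : Set (EuclideanSpace ℝ (Fin n))} (hK : IsCompact K)
    (hKL : K ⊆ thickening r ((fun t : ℝ => (1 - t) • v₁ + t • v₂) '' Icc 0 1)) :
    volume K ≤ volume (thickening r S) := by
  rcases K.eq_empty_or_nonempty with rfl | hKne
  · simp
  set e : EuclideanSpace ℝ (Fin n) := d⁻¹ • (v₂ - v₁) with he
  set L : Set (EuclideanSpace ℝ (Fin n)) := (fun t : ℝ => (1 - t) • v₁ + t • v₂) '' Icc 0 1 with hLdef
  have hLc : IsCompact L := isCompact_Icc.image (by fun_prop)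
  have hLne : L.Nonempty := ⟨v₁, ⟨0, by simp⟩⟩
  set π : EuclideanSpace ℝ (Fin n) → ℝ := fun x => ⟪x - v₁, e⟫ with hπ
  have hπcont : Continuous π := (continuous_id.sub continuous_const).inner continuous_const
  -- pythagoras
  have hp : ∀ w : EuclideanSpace ℝ (Fin n), ⟪w, e⟫ = 0 → ∀ b : ℝ, ‖w + b • e‖ ^ 2 = ‖w‖ ^ 2 + b ^ 2 := by
    intro w hw b
    rw [norm_add_sq_real, real_inner_smul_right, hw, norm_smul, mul_pow]
    have : ‖e‖ ^ 2 = 1 := by rw [← real_inner_self_eq_norm_sq]; exact hee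
    rw [this]
    simp [sq_abs]
  have hperp : ∀ x : EuclideanSpace ℝ (Fin n), ⟪x - v₁ - (π x) • e, e⟫ = 0 := by
    intro x
    rw [inner_sub_left, real_inner_smul_left, hee]
    simp [hπ]
  -- the slack δ
  obtain ⟨x₀, hx₀K, hx₀max⟩ := hK.exists_isMaxOn hKne (continuous_infDist_pt L).continuousOn
  set δ : ℝ := r - infDist x₀ L with hδdef
  have hδ : 0 < δ := by
    have h := (mem_thickening_iff_infDist_lt hLne).1 (hKL hx₀K)
    simp only [hδdef]; linarith
  have hδr : δ ≤ r := by
    have h := infDist_nonneg (s := L) (x := x₀)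
    simp only [hδdef]; linarith
  have hKb : ∀ x ∈ K, infDist x L ≤ r - δ := by
    intro x hx
    have := hx₀max hx
    simp only [hδdef]
    simpa using this
  -- key geometric bounds for points of K
  have hgeo : ∀ x ∈ K, ‖x - v₁ - (π x) • e‖ ≤ r - δ ∧
      (π x ≤ 0 → dist x v₁ ≤ r - δ) ∧ (d ≤ π x → dist x v₂ ≤ r - δ) := by
    intro x hx
    obtain ⟨q, hqL, hq⟩ := hLc.exists_infDist_eq_dist hLne x
    have hqb : dist x q ≤ r - δ := hq ▸ hKb x hx
    obtain ⟨s, hs, rfl⟩ := hqL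
    have hsd : 0 ≤ s * d := mul_nonneg hs.1 hd.le
    have hsd' : s * d ≤ d := by nlinarith [hs.2]
    have hxq : x - ((1 - s) • v₁ + s • v₂) = (x - v₁ - (π x) • e) + (π x - s * d) • e := by
      rw [hdef]; module
    have hnq : ‖x - ((1 - s) • v₁ + s • v₂)‖ ^ 2
        = ‖x - v₁ - (π x) • e‖ ^ 2 + (π x - s * d) ^ 2 := by
      rw [hxq]; exact hp _ (hperp x) _
    have hdq : dist x ((1 - s) • v₁ + s • v₂) = ‖x - ((1 - s) • v₁ + s • v₂)‖ := dist_eq_norm _ _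
    refine ⟨?_, ?_, ?_⟩
    · have : ‖x - v₁ - (π x) • e‖ ^ 2 ≤ ‖x - ((1 - s) • v₁ + s • v₂)‖ ^ 2 := by nlinarith
      exact le_trans (sq_le_norm_le this) (by rw [← hdq]; exact hqb)
    · intro ha
      have h1 : ‖x - v₁‖ ^ 2 = ‖x - v₁ - (π x) • e‖ ^ 2 + (π x) ^ 2 := by
        have h := hp _ (hperp x) (π x)
        rwa [sub_add_cancel] at h
      have h2 : ‖x - v₁‖ ^ 2 ≤ ‖x - ((1 - s) • v₁ + s • v₂)‖ ^ 2 := by nlinarith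
      rw [dist_eq_norm]
      exact le_trans (sq_le_norm_le h2) (by rw [← hdq]; exact hqb)
    · intro ha
      have hxv : x - v₂ = (x - v₁ - (π x) • e) + (π x - d) • e := by
        rw [hdef]; module
      have h1 : ‖x - v₂‖ ^ 2 = ‖x - v₁ - (π x) • e‖ ^ 2 + (π x - d) ^ 2 := by
        rw [hxv]; exact hp _ (hperp x) _
      have h2 : ‖x - v₂‖ ^ 2 ≤ ‖x - ((1 - s) • v₁ + s • v₂)‖ ^ 2 := by nlinarith
      rw [dist_eq_norm]
      exact le_trans (sq_le_norm_le h2) (by rw [← hdq]; exact hqb)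
  -- choose N
  obtain ⟨N, hN⟩ := exists_nat_gt (2 * d / δ)
  have hN0 : (0 : ℝ) < N := lt_trans (by positivity) hN
  have hdN : d / N < δ / 2 := by
    rw [div_lt_iff₀ hδ] at hN
    rw [div_lt_div_iff₀ hN0 two_pos]
    nlinarith
  -- choose slice points
  have hsl : ∀ k : Fin N, ∃ p ∈ S, ⟪p - v₁, e⟫ = k * d / N := by
    intro k
    refine hslice _ (by positivity) ?_
    rw [div_le_iff₀ hN0]
    have : (k : ℝ) ≤ N := le_of_lt (by exact_mod_cast k.2)
    nlinarith
  choose p hpS hpπ using hsl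
  -- the slabs and translations
  set W : Option (Fin N) → EuclideanSpace ℝ (Fin n) := fun k => Option.casesOn k 0 (fun k => p k - v₁ - (k * d / N) • e)
    with hW
  set J : Option (Fin N) → Set ℝ :=
    fun k => Option.casesOn k (Iio 0 ∪ Ici d) (fun k => Ico (k * d / N) ((k + 1) * d / N)) with hJ
  have hWe : ∀ k, ⟪W k, e⟫ = 0 := by
    rintro (_ | k)
    · simp [hW]
    · simp only [hW]
      rw [inner_sub_left, real_inner_smul_left, hee, hpπ]
      ring
  have hJm : ∀ k, MeasurableSet (J k) := by
    rintro (_ | k)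
    · exact measurableSet_Iio.union measurableSet_Ici
    · exact measurableSet_Ico
  have hJsub : ∀ k : Fin N, J (some k) ⊆ Ico 0 d := by
    intro k a ha
    simp only [hJ, mem_Ico] at ha ⊢
    have h1 : (0 : ℝ) ≤ k * d / N := by positivity
    have h2 : ((k : ℝ) + 1) * d / N ≤ d := by
      rw [div_le_iff₀ hN0]
      have : (k : ℝ) + 1 ≤ N := by exact_mod_cast k.2
      nlinarith
    constructor <;> linarith [ha.1, ha.2]
  have hJd : ∀ j k, j ≠ k → ∀ a : ℝ, a ∈ J j → a ∈ J k → False := by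
    have key : ∀ j k : Fin N, (j : ℕ) < k → ∀ a : ℝ, a ∈ J (some j) → a ∈ J (some k) → False := by
      intro j k hjk a haj hak
      simp only [hJ, mem_Ico] at haj hak
      have : ((j : ℝ) + 1) ≤ (k : ℝ) := by exact_mod_cast hjk
      have h1 : ((j : ℝ) + 1) * d / N ≤ (k : ℝ) * d / N := by
        rw [div_le_div_iff₀ hN0 hN0]
        nlinarith [mul_le_mul_of_nonneg_right (mul_le_mul_of_nonneg_right this hd.le) hN0.le]
      linarith [haj.2, hak.1]
    rintro (_ | j) (_ | k) hjk a haj hak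
    · exact hjk rfl
    · rcases haj with h | h
      · exact absurd ((hJsub k hak).1) (not_le.mpr h)
      · exact absurd (hJsub k hak).2 (not_lt.mpr h)
    · rcases hak with h | h
      · exact absurd ((hJsub j haj).1) (not_le.mpr h)
      · exact absurd (hJsub j haj).2 (not_lt.mpr h)
    · rcases Nat.lt_trichotomy j k with h | h | h
      · exact key j k h a haj hak
      · exact hjk (by simp [Fin.ext_iff, h])
      · exact key k j h a hak haj
  set P : Option (Fin N) → Set (EuclideanSpace ℝ (Fin n)) := fun k => K ∩ π ⁻¹' (J k) with hP
  set T : Option (Fin N) → Set (EuclideanSpace ℝ (Fin n)) := fun k => (fun y => y - W k) ⁻¹' (P k) with hT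
  have hPm : ∀ k, MeasurableSet (P k) :=
    fun k => hK.measurableSet.inter (hJm k |>.preimage hπcont.measurable)
  have hTm : ∀ k, MeasurableSet (T k) :=
    fun k => (hPm k).preimage (measurable_id.sub measurable_const)
  have hπT : ∀ k, ∀ y ∈ T k, π y ∈ J k ∧ y - W k ∈ K := by
    intro k y hy
    have h1 : y - W k ∈ P k := hy
    have h2 : π (y - W k) = π y := by
      simp only [hπ]
      have : y - W k - v₁ = (y - v₁) - W k := by abel
      rw [this, inner_sub_left, hWe k, sub_zero]
    exact ⟨h2 ▸ h1.2, h1.1⟩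
  have hTd : Pairwise (Function.onFun Disjoint T) := by
    intro j k hjk
    rw [Function.onFun, Set.disjoint_left]
    intro y hyj hyk
    exact hJd j k hjk (π y) (hπT j y hyj).1 (hπT k y hyk).1
  have hPd : Pairwise (Function.onFun Disjoint P) := by
    intro j k hjk
    rw [Function.onFun, Set.disjoint_left]
    intro x hxj hxk
    exact hJd j k hjk (π x) hxj.2 hxk.2
  -- covering
  have hcov : K ⊆ ⋃ k, P k := by
    intro x hx
    have : ∃ k, π x ∈ J k := by
      by_cases h0 : π x < 0 ∨ d ≤ π x
      · exact ⟨none, by simpa [hJ] using h0⟩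
      · push_neg at h0
        obtain ⟨h1, h2⟩ := h0
        set a := π x
        have hnn : 0 ≤ a * N / d := by positivity
        have hfl : (⌊a * N / d⌋₊ : ℝ) ≤ a * N / d := Nat.floor_le hnn
        have hfl' : a * N / d < ⌊a * N / d⌋₊ + 1 := Nat.lt_floor_add_one _
        have hkN : ⌊a * N / d⌋₊ < N := by
          rw [Nat.floor_lt hnn]
          · rw [div_lt_iff₀ hd]
            have : (0:ℝ) < N := hN0
            nlinarith
        refine ⟨some ⟨⌊a * N / d⌋₊, hkN⟩, ?_⟩
        simp only [hJ, mem_Ico]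
        constructor
        · rw [div_le_iff₀ hN0]
          calc (⌊a * N / d⌋₊ : ℝ) * d ≤ (a * N / d) * d := by nlinarith
            _ = a * N := by field_simp
        · rw [lt_div_iff₀ hN0]
          calc a * N = (a * N / d) * d := by field_simp
            _ < ((⌊a * N / d⌋₊ : ℝ) + 1) * d := by nlinarith
    obtain ⟨k, hk⟩ := this
    exact mem_iUnion.2 ⟨k, hx, hk⟩
  have hPU : (⋃ k, P k) = K :=
    subset_antisymm (iUnion_subset fun k => inter_subset_left) hcov
  -- containment of shifted slabs in the thickening of S
  have hsub : ∀ k, T k ⊆ thickening r S := by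
    rintro (_ | k) y hy
    · obtain ⟨hyJ, hyK⟩ := hπT none y hy
      have hy0 : y - W none ∈ K := hyK
      have hyK' : y ∈ K := by simpa [hW] using hy0
      obtain ⟨-, h1, h2⟩ := hgeo y hyK'
      rw [mem_thickening_iff]
      rcases hyJ with h | h
      · exact ⟨v₁, hv₁, lt_of_le_of_lt (h1 (le_of_lt h)) (by linarith)⟩
      · exact ⟨v₂, hv₂, lt_of_le_of_lt (h2 h) (by linarith)⟩
    · obtain ⟨hyJ, hyK⟩ := hπT (some k) y hy
      set x := y - W (some k) with hx
      obtain ⟨hperpb, -, -⟩ := hgeo x hyK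
      have hπxy : π x = π y := by
        simp only [hπ, hx]
        have : y - W (some k) - v₁ = (y - v₁) - W (some k) := by abel
        rw [this, inner_sub_left, hWe (some k), sub_zero]
      rw [mem_thickening_iff]
      refine ⟨p k, hpS k, ?_⟩
      have hyp : y - p k = (x - v₁ - (π x) • e) + (π x - k * d / N) • e := by
        have hWk : W (some k) = p k - v₁ - (k * d / N) • e := rfl
        have : y = x + W (some k) := by rw [hx]; abel
        rw [this, hWk]; module
      have hbnd : |π x - k * d / N| ≤ d / N := by
        rw [hπxy] at *
        simp only [hJ, mem_Ico] at hyJ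
        rw [abs_le]
        have : ((k : ℝ) + 1) * d / N = k * d / N + d / N := by ring
        constructor <;> [linarith [hyJ.1, div_nonneg hd.le hN0.le]; linarith [hyJ.2, this ▸ hyJ.2]]
      rw [dist_eq_norm, hyp]
      calc ‖(x - v₁ - (π x) • e) + (π x - k * d / N) • e‖
          ≤ ‖x - v₁ - (π x) • e‖ + ‖(π x - k * d / N) • e‖ := norm_add_le _ _
        _ ≤ (r - δ) + |π x - k * d / N| * ‖e‖ := by
            rw [norm_smul]; exact add_le_add hperpb (le_refl _)
        _ ≤ (r - δ) + (d / N) * 1 := by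
            have : ‖e‖ = 1 := by
              have : ‖e‖ ^ 2 = 1 := by rw [← real_inner_self_eq_norm_sq]; exact hee
              nlinarith [norm_nonneg e]
            rw [this]
            exact add_le_add_right (by simpa using hbnd) _
        _ < r := by linarith
  -- measure computation
  calc volume K = volume (⋃ k, P k) := by rw [hPU]
    _ = ∑' k, volume (P k) := measure_iUnion hPd hPm
    _ = ∑' k, volume (T k) := by
        refine tsum_congr fun k => ?_
        have : T k = (fun y => y + (-W k)) ⁻¹' (P k) := by
          simp only [hT, sub_eq_add_neg]
        rw [this, measure_preimage_add_right]
    _ = volume (⋃ k, T k) := (measure_iUnion hTd hTm).symm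
    _ ≤ volume (thickening r S) := measure_mono (iUnion_subset hsub)

theorem stmt3 (n : ℕ) (v₁ v₂ : EuclideanSpace ℝ (Fin n))
    (c : ℝ → EuclideanSpace ℝ (Fin n)) (hc : ContinuousOn c (Icc 0 1))
    (hc0 : c 0 = v₁) (hc1 : c 1 = v₂) (r : ℝ) (hr : 0 < r) :
    volume (Metric.thickening r ((fun t : ℝ => (1 - t) • v₁ + t • v₂) '' Icc 0 1))
      ≤ volume (Metric.thickening r (c '' Icc 0 1)) := by
  set S : Set (EuclideanSpace ℝ (Fin n)) := c '' Icc 0 1 with hS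
  have hv₁S : v₁ ∈ S := ⟨0, by simp, hc0⟩
  have hv₂S : v₂ ∈ S := ⟨1, by simp, hc1⟩
  by_cases hvv : v₂ = v₁
  · apply measure_mono
    apply thickening_subset_of_subset
    rintro _ ⟨t, ht, rfl⟩
    have h : (1 - t) • v₁ + t • v₂ = v₁ := by rw [hvv]; module
    show (1 - t) • v₁ + t • v₂ ∈ S
    rw [h]; exact hv₁S
  · set d : ℝ := ‖v₂ - v₁‖ with hd
    have hd0 : 0 < d := by
      rw [hd, norm_pos_iff]
      exact sub_ne_zero.mpr hvv
    have hdef : v₂ = v₁ + d • (d⁻¹ • (v₂ - v₁)) := by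
      rw [smul_smul, mul_inv_cancel₀ hd0.ne', one_smul]; abel
    have hee : ⟪d⁻¹ • (v₂ - v₁), d⁻¹ • (v₂ - v₁)⟫ = 1 := by
      rw [real_inner_smul_left, real_inner_smul_right, real_inner_self_eq_norm_sq, ← hd]
      field_simp
    have hslice : ∀ a : ℝ, 0 ≤ a → a ≤ d → ∃ p ∈ S, ⟪p - v₁, d⁻¹ • (v₂ - v₁)⟫ = a := by
      intro a ha0 had
      have hfc : ContinuousOn (fun t => ⟪c t - v₁, d⁻¹ • (v₂ - v₁)⟫) (Icc 0 1) :=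
        (hc.sub continuousOn_const).inner continuousOn_const
      have h0 : ⟪c 0 - v₁, d⁻¹ • (v₂ - v₁)⟫ = 0 := by rw [hc0]; simp
      have h1 : ⟪c 1 - v₁, d⁻¹ • (v₂ - v₁)⟫ = d := by
        rw [hc1, real_inner_smul_right, real_inner_self_eq_norm_sq, ← hd]
        field_simp
      have hiv := intermediate_value_Icc (by norm_num : (0:ℝ) ≤ 1) hfc
      rw [h0, h1] at hiv
      obtain ⟨t, ht, hta⟩ := hiv ⟨ha0, had⟩
      exact ⟨c t, ⟨t, ht, rfl⟩, hta⟩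
    rw [IsOpen.measure_eq_iSup_isCompact isOpen_thickening volume]
    refine iSup_le fun K => iSup_le fun hKsub => iSup_le fun hKc => ?_
    exact stmt3_aux hd0 hdef hv₁S hv₂S hslice hee hr hKc hKsub
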